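/- Let m > 0, ω > 0, σ > 0, ν ≥ 0, g_r ∈ ℝ, and let Ψ(a,t) = N e^{i g_r t} a^{ν+1} (mω)^{ν+3/2} exp(-(ν+3/2)·Log F(t)) exp(B(t) a²) with N = [2^{ν+5/2} σ^{ν+3/2}/Γ(ν+3/2)]^{1/2}, F(t) = mω cos(ωt) + 2iσ sin(ωt), B(t) = -(mω/2)(2σ cos(ωt) + i mω sin(ωt))/F(t). Then for every t ∈ ℝ such that F(t) is not a nonpositive real number, the expectation value of the scale factor equals ∫₀^∞ a |Ψ(a,t)|² da = [Γ(ν+2)/(√(2σ) Γ(ν+3/2))] · √(4σ² sin²(ωt) + m²ω² cos²(ωt)) / (mω), i.e. ⟨a⟩(t) = (⟨a⟩(0)/(mω)) √(4σ² sin²(ωt) + m²ω² cos²(ωt)). -/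

import Mathlib

private lemma hl_Bre (m ω σ : ℝ) (c s K : ℝ) (pyth : s^2 + c^2 = 1)
    (hK : K = 4*σ^2*s^2 + m^2*ω^2*c^2) (hK0 : 0 < K)
    (Ft Bt : ℂ) (hFt : Ft = (m:ℂ)*(ω:ℂ)*(c:ℂ) + 2*Complex.I*(σ:ℂ)*(s:ℂ))
    (hBt : Bt = -((m:ℂ)*(ω:ℂ)/2) * (2*(σ:ℂ)*(c:ℂ) + Complex.I*(m:ℂ)*(ω:ℂ)*(s:ℂ)) / Ft) :
    Bt.re = -(σ*m^2*ω^2)/K := by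
  have hns : Complex.normSq Ft = K := by
    rw [hFt, hK, Complex.normSq_apply]; simp [Complex.add_re, Complex.mul_re, Complex.mul_im]; ring
  rw [hBt, Complex.div_re, hns, hFt]
  simp [Complex.mul_re, Complex.mul_im]
  field_simp
  linear_combination (-m^2*ω^2*σ) * pyth

private lemma hl_abs (m ω ν gr N a t K : ℝ) (hm : 0 < m) (hω : 0 < ω) (hN : 0 ≤ N)
    (ha : 0 < a) (hK0 : 0 < K)
    (Ft Bt z : ℂ) (habsF : ‖Ft‖ = Real.sqrt K)
    (hz : z = (N:ℂ) * Complex.exp (Complex.I*(gr:ℂ)*(t:ℂ))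
        * ((a ^ (ν + 1) : ℝ) : ℂ) * (((m*ω) ^ (ν + 3/2) : ℝ) : ℂ)
        * Complex.exp (-((ν:ℂ) + 3/2) * Complex.log Ft)
        * Complex.exp (Bt * (a:ℂ)^2)) :
    ‖z‖
      = N * a^(ν+1) * (m*ω)^(ν+3/2) * (Real.sqrt K)^(-(ν+3/2)) * Real.exp (Bt.re * a^2) := by
  have hsK : 0 < Real.sqrt K := Real.sqrt_pos.mpr hK0
  have h1 : ‖Complex.exp (Complex.I*(gr:ℂ)*(t:ℂ))‖ = 1 := by
    rw [Complex.norm_exp]; simp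
  have h2 : ‖Complex.exp (-((ν:ℂ) + 3/2) * Complex.log Ft)‖
      = (Real.sqrt K)^(-(ν+3/2)) := by
    rw [Complex.norm_exp, Real.rpow_def_of_pos hsK]
    congr 1
    have : (-((ν:ℂ) + 3/2) * Complex.log Ft).re = -(ν+3/2) * (Complex.log Ft).re := by
      simp [Complex.mul_re]
    rw [this, Complex.log_re, habsF]; ring
  have h3 : ‖Complex.exp (Bt * (a:ℂ)^2)‖ = Real.exp (Bt.re * a^2) := by
    rw [Complex.norm_exp]
    congr 1
    rw [show ((a:ℂ))^2 = ((a^2 : ℝ) : ℂ) from by push_cast; ring, Complex.mul_re,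
      Complex.ofReal_re, Complex.ofReal_im, mul_zero, sub_zero]
  rw [hz]
  simp only [norm_mul, h1, h2, h3, Complex.norm_real, Real.norm_eq_abs]
  rw [abs_of_nonneg hN, abs_of_nonneg (by positivity : (0:ℝ) ≤ a^(ν+1)),
    abs_of_nonneg (by positivity : (0:ℝ) ≤ (m*ω)^(ν+3/2))]
  ring

private lemma hl_scalar (σ ν P K : ℝ) (hσ : 0 < σ) (hP : 0 < P) (hK0 : 0 < K)
    (G2 G3 : ℝ) (hG2 : 0 < G2) (hG3 : 0 < G3) (Q : ℝ) (hQ : Q = 2*σ*P^2/K) :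
    (2:ℝ)^(ν+5/2)*σ^(ν+3/2)/G3 * P^(2*ν+3) * (Real.sqrt K)^(-(2*ν+3))
      * (Q ^ (-(2*ν+3+1)/2) * (1/2) * G2)
    = G2 / (Real.sqrt (2*σ) * G3) * Real.sqrt K / P := by
  have hQ0 : 0 < Q := by rw [hQ]; positivity
  have hL : (0:ℝ) < (2:ℝ)^(ν+5/2)*σ^(ν+3/2)/G3 * P^(2*ν+3) * (Real.sqrt K)^(-(2*ν+3))
      * (Q ^ (-(2*ν+3+1)/2) * (1/2) * G2) := by positivity
  have hR : (0:ℝ) < G2 / (Real.sqrt (2*σ) * G3) * Real.sqrt K / P := by positivity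
  rw [← Real.exp_log hL, ← Real.exp_log hR]
  congr 1
  rw [hQ]
  simp (disch := first | positivity | (exact ne_of_gt (by positivity))) only
    [Real.log_mul, Real.log_div, Real.log_rpow, Real.log_sqrt, Real.log_pow, Real.log_one]
  ring

/-- Expectation value of the scale factor of the closed Hořava–Lifshitz FLRW quantum
universe: for the evolved wave packet `Ψ` and every `t` at which
`F(t) = mω cos(ωt) + 2iσ sin(ωt)` is not a nonpositive real number,
`⟨a⟩(t) = ∫₀^∞ a |Ψ(a,t)|² da
  = [Γ(ν+2)/(√(2σ)Γ(ν+3/2))] √(4σ² sin²(ωt) + m²ω² cos²(ωt))/(mω)`,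
i.e. `⟨a⟩(t) = (⟨a⟩(0)/(mω)) √(4σ² sin²(ωt) + m²ω² cos²(ωt))`. -/
theorem closed_universe_scale_factor_expectation (m ω σ ν gr : ℝ)
    (hm : 0 < m) (hω : 0 < ω) (hσ : 0 < σ) (hν : 0 ≤ ν)
    (N : ℝ)
    (hN : N = Real.sqrt ((2:ℝ) ^ (ν + 5/2) * σ ^ (ν + 3/2) / Real.Gamma (ν + 3/2)))
    (F B : ℝ → ℂ)
    (hF : ∀ t : ℝ, F t = (m:ℂ)*(ω:ℂ)*((Real.cos (ω*t) : ℝ) : ℂ)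
        + 2*Complex.I*(σ:ℂ)*((Real.sin (ω*t) : ℝ) : ℂ))
    (hB : ∀ t : ℝ, B t = -((m:ℂ)*(ω:ℂ)/2)
        * (2*(σ:ℂ)*((Real.cos (ω*t) : ℝ) : ℂ)
            + Complex.I*(m:ℂ)*(ω:ℂ)*((Real.sin (ω*t) : ℝ) : ℂ)) / F t)
    (Ψ : ℝ → ℝ → ℂ)
    (hΨ : ∀ a t : ℝ, Ψ a t = (N:ℂ) * Complex.exp (Complex.I*(gr:ℂ)*(t:ℂ))
        * ((a ^ (ν + 1) : ℝ) : ℂ) * (((m*ω) ^ (ν + 3/2) : ℝ) : ℂ)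
        * Complex.exp (-((ν:ℂ) + 3/2) * Complex.log (F t))
        * Complex.exp (B t * (a:ℂ)^2)) :
    ∀ t : ℝ, ¬((F t).im = 0 ∧ (F t).re ≤ 0) →
      ∫ a in Set.Ioi (0:ℝ), a * ‖Ψ a t‖ ^ 2
        = (Real.Gamma (ν + 2) / (Real.sqrt (2*σ) * Real.Gamma (ν + 3/2)))
          * Real.sqrt (4*σ^2*Real.sin (ω*t)^2 + m^2*ω^2*Real.cos (ω*t)^2) / (m*ω) := by
  intro t ht
  set c : ℝ := Real.cos (ω*t) with hc
  set s : ℝ := Real.sin (ω*t) with hs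
  have pyth : s^2 + c^2 = 1 := Real.sin_sq_add_cos_sq (ω*t)
  set K : ℝ := 4*σ^2*s^2 + m^2*ω^2*c^2 with hKdef
  have hFt : F t = (m:ℂ)*(ω:ℂ)*(c:ℂ) + 2*Complex.I*(σ:ℂ)*(s:ℂ) := by
    rw [hF, ← hc, ← hs]
  have hBt : B t = -((m:ℂ)*(ω:ℂ)/2) * (2*(σ:ℂ)*(c:ℂ) + Complex.I*(m:ℂ)*(ω:ℂ)*(s:ℂ)) / F t := by
    rw [hB, ← hc, ← hs]
  have hFne : F t ≠ 0 := by
    intro h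
    exact ht ⟨by rw [h]; simp, by rw [h]; simp⟩
  have hnormSq : Complex.normSq (F t) = K := by
    rw [hFt, hKdef, Complex.normSq_apply]
    simp [Complex.add_re, Complex.mul_re, Complex.mul_im]
    ring
  have hK0 : (0:ℝ) < K := by
    rw [← hnormSq]; exact Complex.normSq_pos.mpr hFne
  have habsF : ‖F t‖ = Real.sqrt K := by
    rw [Complex.norm_def, hnormSq]
  have hsK : 0 < Real.sqrt K := Real.sqrt_pos.mpr hK0
  have hBre : (B t).re = -(σ*m^2*ω^2)/K :=
    hl_Bre m ω σ c s K pyth hKdef hK0 (F t) (B t) hFt hBt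
  have hG3 : 0 < Real.Gamma (ν + 3/2) := Real.Gamma_pos_of_pos (by linarith)
  have hG2 : 0 < Real.Gamma (ν + 2) := Real.Gamma_pos_of_pos (by linarith)
  have hN0 : 0 ≤ N := by rw [hN]; exact Real.sqrt_nonneg _
  have hN2 : N^2 = (2:ℝ)^(ν+5/2)*σ^(ν+3/2)/Real.Gamma (ν+3/2) := by
    rw [hN, Real.sq_sqrt (by positivity)]
  have hP : 0 < m*ω := by positivity
  set Q : ℝ := 2*σ*m^2*ω^2/K with hQdef
  have hQ0 : 0 < Q := by positivity
  set C : ℝ := N^2 * (m*ω)^(2*ν+3) * (Real.sqrt K)^(-(2*ν+3)) with hCdef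
  have habs : ∀ a : ℝ, 0 < a → ‖Ψ a t‖
      = N * a^(ν+1) * (m*ω)^(ν+3/2) * (Real.sqrt K)^(-(ν+3/2)) * Real.exp ((B t).re * a^2) :=
    fun a ha => hl_abs m ω ν gr N a t K hm hω hN0 ha hK0 (F t) (B t) (Ψ a t) habsF (hΨ a t)
  have hpt : ∀ a ∈ Set.Ioi (0:ℝ),
      a * ‖Ψ a t‖ ^ 2 = C * (a^(2*ν+3) * Real.exp (-Q * a^((2:ℝ)))) := by
    intro a ha
    have ha : 0 < a := ha
    have hsq : ∀ x p : ℝ, 0 < x → (x^p)^2 = x^(2*p) := by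
      intro x p hx
      rw [sq, ← Real.rpow_add hx]; ring_nf
    have h2a : a ^ ((2:ℝ)) = a^2 := by
      rw [show (2:ℝ) = ((2:ℕ):ℝ) from by norm_num, Real.rpow_natCast]
    have hexp : (Real.exp ((B t).re * a^2))^2 = Real.exp (-Q * a^((2:ℝ))) := by
      rw [sq, ← Real.exp_add, h2a, hBre, hQdef]
      congr 1
      field_simp
      ring
    have haa : a * (a^(ν+1))^2 = a^(2*ν+3) := by
      rw [hsq a _ ha, show a * a^(2*(ν+1)) = a^((1:ℝ)) * a^(2*(ν+1)) from by rw [Real.rpow_one],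
        ← Real.rpow_add ha, show (1:ℝ) + 2*(ν+1) = 2*ν+3 from by ring]
    rw [habs a ha]
    calc a * (N * a^(ν+1) * (m*ω)^(ν+3/2) * (Real.sqrt K)^(-(ν+3/2))
          * Real.exp ((B t).re * a^2))^2
        = (N^2 * ((m*ω)^(ν+3/2))^2 * ((Real.sqrt K)^(-(ν+3/2)))^2)
            * ((a * (a^(ν+1))^2) * (Real.exp ((B t).re * a^2))^2) := by ring
      _ = C * (a^(2*ν+3) * Real.exp (-Q * a^((2:ℝ)))) := by
          rw [hsq _ _ hP, hsq _ _ hsK, hexp, haa, hCdef,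
            show 2*(ν+3/2) = 2*ν+3 from by ring, show 2*(-(ν+3/2)) = -(2*ν+3) from by ring]
  rw [MeasureTheory.setIntegral_congr_fun measurableSet_Ioi hpt,
    MeasureTheory.integral_const_mul,
    integral_rpow_mul_exp_neg_mul_rpow (by norm_num) (by linarith : (-1:ℝ) < 2*ν+3) hQ0,
    show (2*ν+3+1)/2 = ν + 2 from by ring, hCdef, hN2]
  exact hl_scalar σ ν (m*ω) K hσ hP hK0 (Real.Gamma (ν+2)) (Real.Gamma (ν+3/2)) hG2 hG3 Q
    (by rw [hQdef]; ring)
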